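/- With S(ν) the coarse projection and μ^{k+1/2} = D(μ^k) z(C(μ^k)) the IAD coarse correction from iterate μ^k > 0, one has μ^{k+1/2} − μ = (I − S(μ^k))(μ^k − μ). -/

import Mathlib

open Matrix BigOperators

/-- A matrix is column stochastic: nonnegative entries, each column sums to one. -/
def ColStoch {m : Type*} [Fintype m] (M : Matrix m m ℝ) : Prop :=
  (∀ i j, 0 ≤ M i j) ∧ ∀ j, ∑ i, M i j = 1

/-- Irreducibility of a matrix via its pattern of nonzero entries:
the associated directed graph is strongly connected. -/
def Irred {m : Type*} [Fintype m] [DecidableEq m] (M : Matrix m m ℝ) : Prop :=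
  ∀ i j, ∃ k : ℕ, 0 < k ∧ (M ^ k) i j ≠ 0

/-- Weighted inner product `⟨x,y⟩_w = ∑ i, x i * y i * w i`. -/
def innerW {m : Type*} [Fintype m] (w x y : m → ℝ) : ℝ := ∑ i, x i * y i * w i

/-- Weighted `ℓ²(w)` norm. -/
noncomputable def normW {m : Type*} [Fintype m] (w x : m → ℝ) : ℝ :=
  Real.sqrt (innerW w x x)

/-- Operator norm of a matrix with respect to the `ℓ²(w)` norm. -/
noncomputable def opNormW {m : Type*} [Fintype m] (w : m → ℝ) (M : Matrix m m ℝ) : ℝ :=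
  sInf {c | 0 ≤ c ∧ ∀ x, normW w (M.mulVec x) ≤ c * normW w x}

/-- Aggregation operator for the partition `{f⁻¹(i)}` of `Fin N`. -/
def Agg {N n : ℕ} (f : Fin N → Fin n) : Matrix (Fin n) (Fin N) ℝ :=
  fun i x => if f x = i then 1 else 0

/-- Disaggregation operator for the partition `{f⁻¹(i)}` and weight vector ν. -/
noncomputable def Disagg {N n : ℕ} (f : Fin N → Fin n) (ν : Fin N → ℝ) :
    Matrix (Fin N) (Fin n) ℝ :=
  fun j i => if f j = i then ν j / (Agg f).mulVec ν i else 0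

/-- Coarse approximation `C(ν) = A P D(ν)`. -/
noncomputable def CoarseC {N n : ℕ} (P : Matrix (Fin N) (Fin N) ℝ) (f : Fin N → Fin n)
    (ν : Fin N → ℝ) : Matrix (Fin n) (Fin n) ℝ := Agg f * P * Disagg f ν

/-- `P̂ = P - μ 𝟙ᵀ`. -/
def hatP {N : ℕ} (P : Matrix (Fin N) (Fin N) ℝ) (μ : Fin N → ℝ) :
    Matrix (Fin N) (Fin N) ℝ := P - vecMulVec μ 1

/-- Coarse projection `S(ν) = D(ν)[A(I-P+μ𝟙ᵀ)D(ν)]⁻¹ A(I-P+μ𝟙ᵀ)`. -/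
noncomputable def CoarseS {N n : ℕ} (P : Matrix (Fin N) (Fin N) ℝ) (f : Fin N → Fin n)
    (μ ν : Fin N → ℝ) : Matrix (Fin N) (Fin N) ℝ :=
  Disagg f ν * (Agg f * (1 - P + vecMulVec μ 1) * Disagg f ν)⁻¹ *
    (Agg f * (1 - P + vecMulVec μ 1))

/-- Orthogonal coarse projection `Π(ν) = D(ν) A`. -/
noncomputable def PiProj {N n : ℕ} (f : Fin N → Fin n) (ν : Fin N → ℝ) :
    Matrix (Fin N) (Fin N) ℝ := Disagg f ν * Agg f

/-- Error propagation operator `J(ν) = P̂ (I - S(ν))`. -/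
noncomputable def Jop {N n : ℕ} (P : Matrix (Fin N) (Fin N) ℝ) (f : Fin N → Fin n)
    (μ ν : Fin N → ℝ) : Matrix (Fin N) (Fin N) ℝ := hatP P μ * (1 - CoarseS P f μ ν)

/-- Spectrum (set of complex eigenvalues) of a real matrix. -/
noncomputable def specC {N : ℕ} (M : Matrix (Fin N) (Fin N) ℝ) : Set ℂ :=
  spectrum ℂ (M.map (Complex.ofReal))

/-- Spectral radius of a real matrix. -/
noncomputable def specRad {N : ℕ} (M : Matrix (Fin N) (Fin N) ℝ) : ℝ :=
  sSup ((fun z : ℂ => ‖z‖) '' specC M)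

/-- The `ℓ²(1/μ)`-adjoint `diag(μ) Mᵀ diag(1/μ)`. -/
noncomputable def adjW {N : ℕ} (μ : Fin N → ℝ) (M : Matrix (Fin N) (Fin N) ℝ) :
    Matrix (Fin N) (Fin N) ℝ :=
  Matrix.diagonal μ * Mᵀ * Matrix.diagonal (fun i => (μ i)⁻¹)

/-- The ε-inner product `⟨x,y⟩_ε = ⟨x,(I-Π(μ))y⟩_{1/μ} + ε ⟨x,Π(μ)y⟩_{1/μ}`. -/
noncomputable def innerEps {N n : ℕ} (f : Fin N → Fin n) (μ : Fin N → ℝ) (ε : ℝ)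
    (x y : Fin N → ℝ) : ℝ :=
  innerW (fun i => (μ i)⁻¹) x ((1 - PiProj f μ).mulVec y) +
    ε * innerW (fun i => (μ i)⁻¹) x ((PiProj f μ).mulVec y)

/-- The ε-norm. -/
noncomputable def normEps {N n : ℕ} (f : Fin N → Fin n) (μ : Fin N → ℝ) (ε : ℝ)
    (x : Fin N → ℝ) : ℝ := Real.sqrt (innerEps f μ ε x x)

/-- Operator norm induced by the ε-norm. -/
noncomputable def opNormEps {N n : ℕ} (f : Fin N → Fin n) (μ : Fin N → ℝ) (ε : ℝ)
    (M : Matrix (Fin N) (Fin N) ℝ) : ℝ :=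
  sInf {c | 0 ≤ c ∧ ∀ x, normEps f μ ε (M.mulVec x) ≤ c * normEps f μ ε x}

section AuxPF

lemma pow_nonneg_entries {m : ℕ} {C : Matrix (Fin m) (Fin m) ℝ}
    (h : ∀ i j, 0 ≤ C i j) : ∀ (k : ℕ) (i j : Fin m), 0 ≤ (C ^ k) i j := by
  intro k
  induction k with
  | zero => intro i j; rw [pow_zero, Matrix.one_apply]; split <;> norm_num
  | succ k ih =>
      intro i j
      rw [pow_succ, Matrix.mul_apply]
      exact Finset.sum_nonneg fun l _ => mul_nonneg (ih i l) (h l j)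

lemma mulVec_apply' {a b : Type*} [Fintype b] (M : Matrix a b ℝ) (v : b → ℝ) (i : a) :
    M.mulVec v i = ∑ j, M i j * v j := rfl

lemma sum_mulVec {a b : Type*} [Fintype a] [Fintype b] (M : Matrix a b ℝ)
    (h : ∀ j, ∑ i, M i j = 1) (v : b → ℝ) :
    ∑ i, M.mulVec v i = ∑ j, v j := by
  simp only [mulVec_apply']
  rw [Finset.sum_comm]
  refine Finset.sum_congr rfl fun j _ => ?_
  rw [← Finset.sum_mul, h j, one_mul]

lemma entries_nonneg_mul {a b c : Type*} [Fintype b] (X : Matrix a b ℝ) (Y : Matrix b c ℝ)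
    (hX : ∀ i j, 0 ≤ X i j) (hY : ∀ i j, 0 ≤ Y i j) : ∀ i j, 0 ≤ (X * Y) i j := by
  intro i j; rw [Matrix.mul_apply]
  exact Finset.sum_nonneg fun l _ => mul_nonneg (hX i l) (hY l j)

lemma colsum_mul {a b c : Type*} [Fintype a] [Fintype b] [Fintype c]
    (X : Matrix a b ℝ) (Y : Matrix b c ℝ)
    (hX : ∀ j, ∑ i, X i j = 1) (hY : ∀ j, ∑ i, Y i j = 1) :
    ∀ j, ∑ i, (X * Y) i j = 1 := by
  intro j
  simp only [Matrix.mul_apply]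
  rw [Finset.sum_comm]
  calc ∑ l, ∑ i, X i l * Y l j = ∑ l, Y l j := by
        refine Finset.sum_congr rfl fun l _ => ?_
        rw [← Finset.sum_mul, hX l, one_mul]
    _ = 1 := hY j

lemma pf_pos {m : ℕ} (C : Matrix (Fin m) (Fin m) ℝ) (hC : ColStoch C)
    (hirr : Irred C) (x : Fin m → ℝ) (hx : C.mulVec x = x)
    (hs : ∑ i, x i = 0) (i0 : Fin m) (hi0 : 0 < x i0) : False := by
  obtain ⟨hCn, hCs⟩ := hC
  have hmv : ∀ i, ∑ j, C i j * x j = x i := fun i => by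
    rw [← mulVec_apply', hx]
  have hrow_le : ∀ i, |x i| ≤ ∑ j, C i j * |x j| := by
    intro i
    calc |x i| = |∑ j, C i j * x j| := by rw [hmv]
      _ ≤ ∑ j, |C i j * x j| := Finset.abs_sum_le_sum_abs _ _
      _ = ∑ j, C i j * |x j| := by
          refine Finset.sum_congr rfl fun j _ => ?_
          rw [abs_mul, abs_of_nonneg (hCn i j)]
  have htot : ∑ i, ∑ j, C i j * |x j| = ∑ j, |x j| := by
    rw [Finset.sum_comm]
    refine Finset.sum_congr rfl fun j _ => ?_
    rw [← Finset.sum_mul, hCs j, one_mul]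
  have hrow : ∀ i, ∑ j, C i j * |x j| = |x i| := by
    by_contra h
    push_neg at h
    obtain ⟨i, hi⟩ := h
    have hlt : ∑ i, |x i| < ∑ i, ∑ j, C i j * |x j| :=
      Finset.sum_lt_sum (fun i _ => hrow_le i)
        ⟨i, Finset.mem_univ i, lt_of_le_of_ne (hrow_le i) (fun e => hi e.symm)⟩
    rw [htot] at hlt
    exact lt_irrefl _ hlt
  have hZ : ∀ i, x i = 0 → ∀ j, x j ≠ 0 → C i j = 0 := by
    intro i hi j hj
    have h0 : ∑ j, C i j * |x j| = 0 := by rw [hrow i, hi, abs_zero]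
    have := (Finset.sum_eq_zero_iff_of_nonneg
      (fun j _ => mul_nonneg (hCn i j) (abs_nonneg _))).mp h0 j (Finset.mem_univ j)
    rcases mul_eq_zero.mp this with h | h
    · exact h
    · exact absurd (abs_eq_zero.mp h) hj
  have hZk : ∀ (k : ℕ) (i j : Fin m), x i = 0 → x j ≠ 0 → (C ^ k) i j = 0 := by
    intro k
    induction k with
    | zero =>
        intro i j hi hj
        have hne : i ≠ j := fun e => hj (e ▸ hi)
        rw [pow_zero, Matrix.one_apply_ne hne]
    | succ k ih =>
        intro i j hi hj
        rw [pow_succ', Matrix.mul_apply]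
        refine Finset.sum_eq_zero fun l _ => ?_
        by_cases hl : x l = 0
        · rw [ih l j hl hj, mul_zero]
        · rw [hZ i hi l hl, zero_mul]
  have hsupp : ∀ j, x j ≠ 0 := by
    intro j
    by_contra hj0
    obtain ⟨k, _, hkC⟩ := hirr j i0
    exact hkC (hZk k j i0 hj0 hi0.ne')
  have hsign : ∀ i j, 0 < x i → C i j ≠ 0 → 0 < x j := by
    intro i j hxi hCij
    have h1 : ∑ j, C i j * (|x j| - x j) = 0 := by
      calc ∑ j, C i j * (|x j| - x j)
          = (∑ j, C i j * |x j|) - ∑ j, C i j * x j := by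
            rw [← Finset.sum_sub_distrib]
            exact Finset.sum_congr rfl fun j _ => mul_sub _ _ _
        _ = |x i| - x i := by rw [hrow i, hmv i]
        _ = 0 := by rw [abs_of_pos hxi, sub_self]
    have h2 := (Finset.sum_eq_zero_iff_of_nonneg
      (fun j _ => mul_nonneg (hCn i j) (sub_nonneg.mpr (le_abs_self _)))).mp h1 j
      (Finset.mem_univ j)
    rcases mul_eq_zero.mp h2 with h | h
    · exact absurd h hCij
    · have : |x j| = x j := by linarith [sub_eq_zero.mp h]
      have hnn : 0 ≤ x j := this ▸ abs_nonneg (x j)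
      exact lt_of_le_of_ne hnn (Ne.symm (hsupp j))
  have hsignk : ∀ (k : ℕ) (i j : Fin m), 0 < x i → (C ^ k) i j ≠ 0 → 0 < x j := by
    intro k
    induction k with
    | zero =>
        intro i j hxi hne
        rw [pow_zero] at hne
        have : i = j := by
          by_contra h
          exact hne (Matrix.one_apply_ne h)
        exact this ▸ hxi
    | succ k ih =>
        intro i j hxi hne
        rw [pow_succ', Matrix.mul_apply] at hne
        obtain ⟨l, _, hl⟩ := Finset.exists_ne_zero_of_sum_ne_zero hne
        obtain ⟨h1, h2⟩ := mul_ne_zero_iff.mp hl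
        exact ih l j (hsign i l hxi h1) h2
  have hall : ∀ j, 0 < x j := by
    intro j
    obtain ⟨k, _, hk⟩ := hirr i0 j
    exact hsignk k i0 j hi0 hk
  have hpos : 0 < ∑ i, x i :=
    Finset.sum_pos (fun i _ => hall i) ⟨i0, Finset.mem_univ i0⟩
  rw [hs] at hpos
  exact lt_irrefl _ hpos

lemma pf_unique {m : ℕ} (C : Matrix (Fin m) (Fin m) ℝ) (hC : ColStoch C)
    (hirr : Irred C) (x : Fin m → ℝ) (hx : C.mulVec x = x)
    (hs : ∑ i, x i = 0) : x = 0 := by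
  by_contra h
  obtain ⟨i0, hi0⟩ : ∃ i, x i ≠ 0 := by
    by_contra hh
    push_neg at hh
    exact h (funext fun i => hh i)
  rcases hi0.lt_or_gt with hneg | hpos
  · exact pf_pos C hC hirr (-x) (by rw [Matrix.mulVec_neg, hx]) (by simp [hs]) i0
      (by simpa using hneg)
  · exact pf_pos C hC hirr x hx hs i0 hpos

end AuxPF

/-- error after the coarse correction step:
`μ^{k+1/2} - μ = (I - S(μ^k))(μ^k - μ)`. -/
theorem stmt10 {N n : ℕ} (P : Matrix (Fin N) (Fin N) ℝ)
    (μ : Fin N → ℝ) (hP : ColStoch P) (hirr : Irred P)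
    (hμpos : ∀ i, 0 < μ i) (hμsum : ∑ i, μ i = 1) (hinv : P.mulVec μ = μ)
    (f : Fin N → Fin n) (hf : Function.Surjective f)
    (μk : Fin N → ℝ) (hμkpos : ∀ i, 0 < μk i) (hμksum : ∑ i, μk i = 1)
    (zk : Fin n → ℝ) (hzk : ∀ i, 0 ≤ zk i) (hzksum : ∑ i, zk i = 1)
    (hzkinv : (CoarseC P f μk).mulVec zk = zk) :
    (Disagg f μk).mulVec zk - μ = (1 - CoarseS P f μ μk).mulVec (μk - μ) := by
  classical
  obtain ⟨hPnn, hPcol⟩ := hP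
  set A : Matrix (Fin n) (Fin N) ℝ := Agg f with hAdef
  set D : Matrix (Fin N) (Fin n) ℝ := Disagg f μk with hDdef
  set X : Matrix (Fin N) (Fin N) ℝ := 1 - P + vecMulVec μ 1 with hXdef
  set B : Matrix (Fin n) (Fin N) ℝ := A * X with hBdef
  set M : Matrix (Fin n) (Fin n) ℝ := B * D with hMdef
  set C : Matrix (Fin n) (Fin n) ℝ := A * P * D with hCdef
  have hAapp : ∀ i j, A i j = if f j = i then 1 else 0 := fun i j => rfl
  have hσ : ∀ i, A.mulVec μk i = ∑ j, if f j = i then μk j else 0 := by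
    intro i
    rw [mulVec_apply']
    refine Finset.sum_congr rfl fun j _ => ?_
    rw [hAapp]
    split_ifs <;> simp
  have hσpos : ∀ i, 0 < A.mulVec μk i := by
    intro i
    rw [hσ]
    obtain ⟨j, hj⟩ := hf i
    refine Finset.sum_pos' (fun l _ => ?_) ⟨j, Finset.mem_univ j, ?_⟩
    · split_ifs with h
      · exact (hμkpos l).le
      · exact le_refl 0
    · rw [if_pos hj]; exact hμkpos j
  have hDapp : ∀ j i, D j i = if f j = i then μk j / A.mulVec μk i else 0 := fun j i => rfl
  have hDnn : ∀ j i, 0 ≤ D j i := by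
    intro j i
    rw [hDapp]
    split_ifs
    · exact div_nonneg (hμkpos j).le (hσpos i).le
    · exact le_refl 0
  have hAnn : ∀ i j, 0 ≤ A i j := by
    intro i j; rw [hAapp]; split_ifs <;> norm_num
  have hcolA : ∀ j, ∑ i, A i j = 1 := by
    intro j
    simp only [hAapp]
    rw [Finset.sum_ite_eq Finset.univ (f j) (fun _ => (1:ℝ)), if_pos (Finset.mem_univ _)]
  have hDcol_aux : ∀ i, ∑ j, (if f j = i then μk j / A.mulVec μk i else 0)
      = (∑ j, if f j = i then μk j else 0) / A.mulVec μk i := by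
    intro i
    rw [Finset.sum_div]
    refine Finset.sum_congr rfl fun j _ => ?_
    split_ifs <;> simp
  have hcolD : ∀ i, ∑ j, D j i = 1 := by
    intro i
    simp only [hDapp]
    rw [hDcol_aux, ← hσ i, div_self (hσpos i).ne']
  have hAD : A * D = 1 := by
    ext i i'
    rw [Matrix.mul_apply, Matrix.one_apply]
    by_cases h : i = i'
    · subst h
      rw [if_pos rfl]
      have : ∀ j, A i j * D j i = if f j = i then μk j / A.mulVec μk i else 0 := by
        intro j
        rw [hAapp, hDapp]
        split_ifs <;> simp
      rw [Finset.sum_congr rfl fun j _ => this j, hDcol_aux, ← hσ i, div_self (hσpos i).ne']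
    · rw [if_neg h]
      refine Finset.sum_eq_zero fun j _ => ?_
      rw [hAapp, hDapp]
      split_ifs with h1 h2
      · exact absurd (h1.symm.trans h2) h
      · rw [mul_zero]
      · rw [zero_mul]
      · rw [zero_mul]
  have hDAμk : D.mulVec (A.mulVec μk) = μk := by
    funext j
    rw [mulVec_apply']
    have : ∀ i, D j i * A.mulVec μk i
        = if f j = i then μk j / A.mulVec μk i * A.mulVec μk i else 0 := by
      intro i; rw [hDapp]; split_ifs <;> simp
    rw [Finset.sum_congr rfl fun i _ => this i,
      Finset.sum_ite_eq Finset.univ (f j) (fun i => μk j / A.mulVec μk i * A.mulVec μk i),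
      if_pos (Finset.mem_univ _), div_mul_cancel₀ _ (hσpos (f j)).ne']
  -- C is column stochastic
  have hCnn : ∀ i j, 0 ≤ C i j :=
    entries_nonneg_mul (A * P) D (entries_nonneg_mul A P hAnn hPnn) hDnn
  have hCcol : ∀ j, ∑ i, C i j = 1 :=
    colsum_mul (A * P) D (colsum_mul A P hcolA hPcol) hcolD
  have hCst : ColStoch C := ⟨hCnn, hCcol⟩
  -- C is irreducible
  have hbase : ∀ j j', 0 < P j j' → 0 < C (f j) (f j') := by
    intro j j' hp
    have hAPnn := entries_nonneg_mul A P hAnn hPnn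
    rw [hCdef, Matrix.mul_apply]
    have hterm : 0 < (A * P) (f j) j' * D j' (f j') := by
      refine mul_pos ?_ ?_
      · rw [Matrix.mul_apply]
        have h1 : 0 < A (f j) j * P j j' := by
          rw [hAapp, if_pos rfl, one_mul]; exact hp
        calc (0:ℝ) < A (f j) j * P j j' := h1
          _ ≤ ∑ a, A (f j) a * P a j' :=
            Finset.single_le_sum (f := fun a => A (f j) a * P a j')
              (fun a _ => mul_nonneg (hAnn _ a) (hPnn a _)) (Finset.mem_univ j)
      · rw [hDapp, if_pos rfl]
        exact div_pos (hμkpos j') (hσpos _)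
    calc (0:ℝ) < (A * P) (f j) j' * D j' (f j') := hterm
      _ ≤ ∑ b, (A * P) (f j) b * D b (f j') :=
        Finset.single_le_sum (f := fun b => (A * P) (f j) b * D b (f j'))
          (fun b _ => mul_nonneg (hAPnn _ b) (hDnn b _)) (Finset.mem_univ j')
  have hPk := pow_nonneg_entries hPnn
  have hCk := pow_nonneg_entries hCnn
  have hstep : ∀ (k : ℕ) (j j' : Fin N),
      0 < (P ^ (k+1)) j j' → 0 < (C ^ (k+1)) (f j) (f j') := by
    intro k
    induction k with
    | zero =>
        intro j j' h
        rw [pow_one] at h ⊢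
        exact hbase j j' h
    | succ k ih =>
        intro j j' h
        rw [pow_succ', Matrix.mul_apply] at h
        obtain ⟨l, _, hl⟩ := Finset.exists_ne_zero_of_sum_ne_zero h.ne'
        obtain ⟨h1, h2⟩ := mul_ne_zero_iff.mp hl
        have hpl : 0 < P j l := (hPnn j l).lt_of_ne (Ne.symm h1)
        have hplj : 0 < (P ^ (k+1)) l j' := (hPk (k+1) l j').lt_of_ne (Ne.symm h2)
        rw [pow_succ', Matrix.mul_apply]
        calc (0:ℝ) < C (f j) (f l) * (C ^ (k+1)) (f l) (f j') :=
              mul_pos (hbase j l hpl) (ih l j' hplj)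
          _ ≤ ∑ mm, C (f j) mm * (C ^ (k+1)) mm (f j') :=
            Finset.single_le_sum (f := fun mm => C (f j) mm * (C ^ (k+1)) mm (f j'))
              (fun mm _ => mul_nonneg (hCnn _ mm) (hCk (k+1) mm _)) (Finset.mem_univ (f l))
  have hCirr : Irred C := by
    intro i i'
    obtain ⟨j, hj⟩ := hf i
    obtain ⟨j', hj'⟩ := hf i'
    obtain ⟨k, hk0, hkne⟩ := hirr j j'
    obtain ⟨k', rfl⟩ : ∃ k', k = k' + 1 := ⟨k - 1, (Nat.succ_pred_eq_of_pos hk0).symm⟩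
    refine ⟨k' + 1, Nat.succ_pos _, ?_⟩
    rw [← hj, ← hj']
    exact (hstep k' j j' ((hPk (k'+1) j j').lt_of_ne (Ne.symm hkne))).ne'
  -- action of vecMulVec μ 1
  have hvmv : ∀ (u : Fin N → ℝ), (vecMulVec μ 1).mulVec u = (∑ i, u i) • μ := by
    intro u
    funext i
    rw [mulVec_apply']
    simp only [Matrix.vecMulVec_apply, Pi.one_apply, mul_one, Pi.smul_apply, smul_eq_mul]
    rw [← Finset.mul_sum, mul_comm]
  have hXv : ∀ v, X.mulVec v = v - P.mulVec v + (∑ i, v i) • μ := by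
    intro v
    rw [hXdef, Matrix.add_mulVec, Matrix.sub_mulVec, Matrix.one_mulVec, hvmv]
  have hMv : ∀ v, M.mulVec v = v - C.mulVec v + (∑ i, v i) • (A.mulVec μ) := by
    intro v
    have h1 : M.mulVec v = A.mulVec (X.mulVec (D.mulVec v)) := by
      rw [hMdef, hBdef, ← Matrix.mulVec_mulVec, ← Matrix.mulVec_mulVec]
    rw [h1, hXv, Matrix.mulVec_add, Matrix.mulVec_sub, Matrix.mulVec_smul]
    have e1 : A.mulVec (D.mulVec v) = v := by
      rw [Matrix.mulVec_mulVec, hAD, Matrix.one_mulVec]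
    have e2 : A.mulVec (P.mulVec (D.mulVec v)) = C.mulVec v := by
      rw [Matrix.mulVec_mulVec, Matrix.mulVec_mulVec, hCdef]
    have e3 : ∑ i, (D.mulVec v) i = ∑ i, v i := sum_mulVec D hcolD v
    rw [e1, e2, e3]
  -- invertibility of M
  have hdet : M.det ≠ 0 := by
    intro hdet0
    obtain ⟨v, hv0, hv⟩ := Matrix.exists_mulVec_eq_zero_iff.mpr hdet0
    have hsAμ : ∑ i, (A.mulVec μ) i = 1 := by rw [sum_mulVec A hcolA μ, hμsum]
    have hsumv : ∑ i, v i = 0 := by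
      have h2 : ∑ i, (M.mulVec v) i = ∑ i, v i := by
        rw [hMv]
        simp only [Pi.add_apply, Pi.sub_apply, Pi.smul_apply, smul_eq_mul]
        rw [Finset.sum_add_distrib, Finset.sum_sub_distrib, ← Finset.mul_sum,
          sum_mulVec C hCcol v, hsAμ, mul_one]
        ring
      rw [hv] at h2
      simpa using h2.symm
    have hCv : C.mulVec v = v := by
      have := hMv v
      rw [hv, hsumv, zero_smul, add_zero] at this
      have h3 : v - C.mulVec v = 0 := this.symm
      funext i
      have := congrFun h3 i
      simp only [Pi.sub_apply, Pi.zero_apply] at this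
      linarith
    exact hv0 (pf_unique C hCst hCirr v hCv hsumv)
  have hMinvM : M⁻¹ * M = 1 := Matrix.nonsing_inv_mul M (isUnit_iff_ne_zero.mpr hdet)
  -- key vector identities
  have hMAμk : M.mulVec (A.mulVec μk)
      = A.mulVec μk - A.mulVec (P.mulVec μk) + A.mulVec μ := by
    rw [hMv]
    have h1 : C.mulVec (A.mulVec μk) = A.mulVec (P.mulVec μk) := by
      rw [hCdef, ← Matrix.mulVec_mulVec, ← Matrix.mulVec_mulVec, hDAμk]
    rw [h1, sum_mulVec A hcolA μk, hμksum, one_smul]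
  have hMzk : M.mulVec zk = A.mulVec μ := by
    have hCzk : C.mulVec zk = zk := by
      have : CoarseC P f μk = C := rfl
      rw [← this]; exact hzkinv
    rw [hMv, hCzk, hzksum, one_smul, sub_self, zero_add]
  have hMdiff : M.mulVec (A.mulVec μk - zk)
      = A.mulVec μk - A.mulVec (P.mulVec μk) := by
    rw [Matrix.mulVec_sub, hMAμk, hMzk]
    abel
  have hBdiff : B.mulVec (μk - μ) = A.mulVec μk - A.mulVec (P.mulVec μk) := by
    have h0 : B.mulVec (μk - μ) = A.mulVec (X.mulVec (μk - μ)) := by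
      rw [hBdef, ← Matrix.mulVec_mulVec]
    rw [h0, hXv]
    have hsub : ∑ i, (μk - μ) i = 0 := by
      simp only [Pi.sub_apply]
      rw [Finset.sum_sub_distrib, hμksum, hμsum, sub_self]
    rw [hsub, zero_smul, add_zero, Matrix.mulVec_sub P, hinv,
      Matrix.mulVec_sub, Matrix.mulVec_sub, Matrix.mulVec_sub]
    abel
  have hkey : M⁻¹.mulVec (B.mulVec (μk - μ)) = A.mulVec μk - zk := by
    rw [hBdiff, ← hMdiff, Matrix.mulVec_mulVec, hMinvM, Matrix.one_mulVec]
  have hS : CoarseS P f μ μk = D * M⁻¹ * B := rfl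
  rw [hS, Matrix.sub_mulVec, Matrix.one_mulVec]
  have hSv : (D * M⁻¹ * B).mulVec (μk - μ) = μk - D.mulVec zk := by
    rw [← Matrix.mulVec_mulVec, ← Matrix.mulVec_mulVec, hkey, Matrix.mulVec_sub, hDAμk]
  rw [hSv]
  abel
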